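/- If man m pushes up a set X of women without incurring regret, then every proposal made during the execution of DA on the true profile also occurs during the execution of DA on the manipulated profile. -/

import Mathlib

/-- A stable marriage profile: `M m` is man `m`'s ranking of women
(`M m k` = his `k`-th favorite woman), `W w` is woman `w`'s ranking of men. -/
structure Profile (n : ℕ) where
  M : Fin n → (Fin n ≃ Fin n)
  W : Fin n → (Fin n ≃ Fin n)

/-- Man `m` strictly prefers woman `w₁` to woman `w₂`. -/
def Profile.mpref {n : ℕ} (P : Profile n) (m w₁ w₂ : Fin n) : Prop :=
  (P.M m).symm w₁ < (P.M m).symm w₂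

/-- Woman `w` strictly prefers man `m₁` to man `m₂`. -/
def Profile.wpref {n : ℕ} (P : Profile n) (w m₁ m₂ : Fin n) : Prop :=
  (P.W w).symm m₁ < (P.W w).symm m₂

/-- State of the Gale–Shapley (deferred acceptance) algorithm:
`next m` is the rank of the next woman `m` will propose to, `wmatch w` is the man
currently (tentatively) held by woman `w`, `props` records all proposals made so far. -/
structure GSState (n : ℕ) where
  next : Fin n → ℕ
  wmatch : Fin n → Option (Fin n)
  props : List (Fin n × Fin n)

/-- Man `m` is currently not held by any woman. -/
def isUnmatched {n : ℕ} (s : GSState n) (m : Fin n) : Bool :=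
  decide (∀ w, s.wmatch w ≠ some m)

/-- One step of men-proposing deferred acceptance: the first unmatched man
proposes to the next woman on his list; she keeps her favorite proposer so far. -/
def GSstep {n : ℕ} (P : Profile n) (s : GSState n) : GSState n :=
  match (List.finRange n).find? (fun m => isUnmatched s m && decide (s.next m < n)) with
  | none => s
  | some m =>
    if h : s.next m < n then
      let w := P.M m ⟨s.next m, h⟩
      let s' : GSState n :=
        { next := Function.update s.next m (s.next m + 1),
          wmatch := s.wmatch,
          props := (m, w) :: s.props }
      match s.wmatch w with
      | none => { s' with wmatch := Function.update s.wmatch w (some m) }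
      | some m' =>
          if (P.W w).symm m < (P.W w).symm m' then
            { s' with wmatch := Function.update s.wmatch w (some m) }
          else s'
    else s

def GSinit (n : ℕ) : GSState n := ⟨fun _ => 0, fun _ => none, []⟩

/-- Run deferred acceptance to completion (at most `n*n` proposals occur). -/
def GSrun {n : ℕ} (P : Profile n) : GSState n := (GSstep P)^[n * n + 1] (GSinit n)

/-- The men-proposing deferred acceptance matching, as a map from men to women. -/
noncomputable def DA {n : ℕ} (P : Profile n) : Fin n → Fin n :=
  fun m => if h : ∃ w, (GSrun P).wmatch w = some m then h.choose else m

/-- Man `m` proposes to woman `w` during the run of deferred acceptance on `P`. -/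
def Proposes {n : ℕ} (P : Profile n) (m w : Fin n) : Prop :=
  (m, w) ∈ (GSrun P).props

/-- `(m, w)` is a blocking pair for the matching `μ` (men to women) w.r.t. profile `P`. -/
def Blocks {n : ℕ} (P : Profile n) (μ : Fin n → Fin n) (m w : Fin n) : Prop :=
  P.mpref m w (μ m) ∧ ∃ m', μ m' = w ∧ P.wpref w m m'

/-- `μ` is a stable matching with respect to profile `P`. -/
def Stable {n : ℕ} (P : Profile n) (μ : Fin n → Fin n) : Prop :=
  Function.Bijective μ ∧ ∀ m w, ¬ Blocks P μ m w

/-- Replace man `m`'s preference list by `e`. -/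
def Profile.updateM {n : ℕ} (P : Profile n) (m : Fin n) (e : Fin n ≃ Fin n) : Profile n :=
  { P with M := Function.update P.M m e }

/-- Replace woman `w`'s preference list by `e`. -/
def Profile.updateW {n : ℕ} (P : Profile n) (w : Fin n) (e : Fin n ≃ Fin n) : Profile n :=
  { P with W := Function.update P.W w e }

/-- The set of women ranked strictly above `w₀` in the list `e`. -/
def Above {n : ℕ} (e : Fin n ≃ Fin n) (w₀ : Fin n) : Set (Fin n) :=
  {w | e.symm w < e.symm w₀}

/-- The set of women ranked strictly below `w₀` in the list `e`. -/
def Below {n : ℕ} (e : Fin n ≃ Fin n) (w₀ : Fin n) : Set (Fin n) :=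
  {w | e.symm w₀ < e.symm w}

/-- `e'` is obtained from man `m`'s true list by pushing up the set `X` and pushing
down the set `Y` around the pivot `DA P m` (the order of women above and below
the pivot is immaterial, cf. Proposition 2 of the paper). -/
def PushUpDown {n : ℕ} (P : Profile n) (m : Fin n) (X Y : Set (Fin n))
    (e' : Fin n ≃ Fin n) : Prop :=
  Above e' (DA P m) = (Above (P.M m) (DA P m) ∪ X) \ Y

/-- `e'` is obtained from `m`'s true list by pushing up the set `X` above `DA P m`. -/
def PushUp {n : ℕ} (P : Profile n) (m : Fin n) (X : Set (Fin n))
    (e' : Fin n ≃ Fin n) : Prop :=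
  PushUpDown P m X ∅ e'

/-- `e'` is obtained from `m`'s true list by pushing down the set `Y` below `DA P m`. -/
def PushDown {n : ℕ} (P : Profile n) (m : Fin n) (Y : Set (Fin n))
    (e' : Fin n ≃ Fin n) : Prop :=
  PushUpDown P m ∅ Y e'

/-- Woman `w` is ranked below `DA P m` in `m`'s true list, and pushing her up
individually leaves `m`'s deferred acceptance partner unchanged (no regret). -/
def NoRegretWoman {n : ℕ} (P : Profile n) (m w : Fin n) : Prop :=
  w ∈ Below (P.M m) (DA P m) ∧
    ∀ e' : Fin n ≃ Fin n, PushUp P m {w} e' → DA (P.updateM m e') m = DA P m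

/-- The no-regret set `W^NR` of accomplice `m`. -/
def WNR {n : ℕ} (P : Profile n) (m : Fin n) : Set (Fin n) :=
  {w | NoRegretWoman P m w}

section DAlemmas

variable {n : ℕ}

lemma isUnmatched_iff {s : GSState n} {m : Fin n} :
    isUnmatched s m = true ↔ ∀ u, s.wmatch u ≠ some m := by
  simp [isUnmatched]

/-- The state after `m`'s proposal to `w` is accepted. -/
def acceptState (s : GSState n) (m w : Fin n) : GSState n :=
  { next := Function.update s.next m (s.next m + 1),
    wmatch := Function.update s.wmatch w (some m),
    props := (m, w) :: s.props }

/-- The state after `m`'s proposal to `w` is rejected. -/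
def rejectState (s : GSState n) (m w : Fin n) : GSState n :=
  { next := Function.update s.next m (s.next m + 1),
    wmatch := s.wmatch,
    props := (m, w) :: s.props }

lemma GSstep_none {P : Profile n} {s : GSState n}
    (hf : (List.finRange n).find? (fun x => isUnmatched s x && decide (s.next x < n)) = none) :
    GSstep P s = s := by
  unfold GSstep
  rw [hf]

lemma GSstep_find?_some {P : Profile n} {s : GSState n} {m : Fin n}
    (hf : (List.finRange n).find? (fun x => isUnmatched s x && decide (s.next x < n)) = some m) :
    ∃ h : s.next m < n, (∀ u, s.wmatch u ≠ some m) ∧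
      ((∀ m', s.wmatch (P.M m ⟨s.next m, h⟩) = some m' →
          (P.W (P.M m ⟨s.next m, h⟩)).symm m < (P.W (P.M m ⟨s.next m, h⟩)).symm m') ∧
        GSstep P s = acceptState s m (P.M m ⟨s.next m, h⟩) ∨
       (∃ m', s.wmatch (P.M m ⟨s.next m, h⟩) = some m' ∧
          ¬ (P.W (P.M m ⟨s.next m, h⟩)).symm m < (P.W (P.M m ⟨s.next m, h⟩)).symm m') ∧
        GSstep P s = rejectState s m (P.M m ⟨s.next m, h⟩)) := by
  have hp := List.find?_some hf
  simp only [Bool.and_eq_true, decide_eq_true_eq] at hp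
  obtain ⟨hum, h⟩ := hp
  refine ⟨h, isUnmatched_iff.mp hum, ?_⟩
  have heq : GSstep P s =
      (match s.wmatch (P.M m ⟨s.next m, h⟩) with
       | none => acceptState s m (P.M m ⟨s.next m, h⟩)
       | some m' =>
           if (P.W (P.M m ⟨s.next m, h⟩)).symm m < (P.W (P.M m ⟨s.next m, h⟩)).symm m' then
             acceptState s m (P.M m ⟨s.next m, h⟩)
           else rejectState s m (P.M m ⟨s.next m, h⟩)) := by
    unfold GSstep
    rw [hf]
    simp only [dif_pos h]
    rcases s.wmatch (P.M m ⟨s.next m, h⟩) with - | m'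
    · rfl
    · by_cases hc : (P.W (P.M m ⟨s.next m, h⟩)).symm m < (P.W (P.M m ⟨s.next m, h⟩)).symm m'
      · simp only [if_pos hc]; rfl
      · simp only [if_neg hc]; rfl
  rcases hmw : s.wmatch (P.M m ⟨s.next m, h⟩) with - | m'
  · rw [hmw] at heq
    exact Or.inl ⟨fun m' hm' => absurd hm' (by simp), heq⟩
  · rw [hmw] at heq
    by_cases hc : (P.W (P.M m ⟨s.next m, h⟩)).symm m < (P.W (P.M m ⟨s.next m, h⟩)).symm m'
    · exact Or.inl ⟨fun m'' hm'' => by rwa [← Option.some.inj hm''], heq.trans (if_pos hc)⟩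
    · exact Or.inr ⟨⟨m', rfl, hc⟩, heq.trans (if_neg hc)⟩

end DAlemmas

section InvSection
variable {n : ℕ}

/-- Invariant maintained by the Gale–Shapley algorithm. -/
structure GSInv (P : Profile n) (s : GSState n) : Prop where
  next_le : ∀ mi, s.next mi ≤ n
  props_iff : ∀ mi w, (mi, w) ∈ s.props ↔ ((P.M mi).symm w : ℕ) < s.next mi
  match_next : ∀ w mi, s.wmatch w = some mi → s.next mi = ((P.M mi).symm w : ℕ) + 1
  match_inj : ∀ w1 w2 mi, s.wmatch w1 = some mi → s.wmatch w2 = some mi → w1 = w2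
  held_best : ∀ mi w, (mi, w) ∈ s.props →
    ∃ mj, s.wmatch w = some mj ∧ ((P.W w).symm mj : ℕ) ≤ ((P.W w).symm mi : ℕ)
  opt : ∀ μ : Fin n → Fin n, Stable P μ → ∀ mi, (mi, μ mi) ∈ s.props →
    s.wmatch (μ mi) = some mi

lemma GSInv_init (P : Profile n) : GSInv P (GSinit n) := by
  constructor <;> intros <;> simp_all [GSinit]

lemma GSInv_step {P : Profile n} {s : GSState n} (hI : GSInv P s) : GSInv P (GSstep P s) := by
  rcases hf : (List.finRange n).find? (fun x => isUnmatched s x && decide (s.next x < n)) with - | m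
  · rw [GSstep_none hf]; exact hI
  obtain ⟨h, hunm, hcase⟩ := GSstep_find?_some (P := P) hf
  set w : Fin n := P.M m ⟨s.next m, h⟩ with hwdef
  have hrkw : ((P.M m).symm w : ℕ) = s.next m := by
    rw [hwdef, Equiv.symm_apply_apply]
  -- facts common to both cases
  have hne_of_match : ∀ u mi, s.wmatch u = some mi → mi ≠ m := by
    intro u mi hu he; exact hunm u (he ▸ hu)
  have props_iff' : ∀ mi wj, (mi, wj) ∈ (m, w) :: s.props ↔
      ((P.M mi).symm wj : ℕ) < Function.update s.next m (s.next m + 1) mi := by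
    intro mi wj
    by_cases hmi : mi = m
    · subst hmi
      rw [Function.update_self]
      constructor
      · intro hmem
        rcases List.mem_cons.mp hmem with hh | hh
        · have : wj = w := (Prod.mk.injEq _ _ _ _ ▸ hh).2
          subst this; omega
        · have := (hI.props_iff mi wj).mp hh; omega
      · intro hlt
        rcases Nat.lt_succ_iff_lt_or_eq.mp hlt with hlt | heq
        · exact List.mem_cons_of_mem _ ((hI.props_iff mi wj).mpr hlt)
        · have hwj : wj = w := by
            apply (P.M mi).symm.injective
            apply Fin.ext
            rw [hrkw]
            exact heq
          subst hwj; exact List.mem_cons_self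
    · rw [Function.update_of_ne hmi]
      rw [List.mem_cons]
      constructor
      · rintro (hh | hh)
        · exact absurd ((Prod.mk.injEq _ _ _ _ ▸ hh).1) hmi
        · exact (hI.props_iff mi wj).mp hh
      · intro hlt; exact Or.inr ((hI.props_iff mi wj).mpr hlt)
  rcases hcase with ⟨hbetter, hstep⟩ | ⟨⟨m', hm', hnlt⟩, hstep⟩
  · -- accept case
    rw [hstep]
    constructor
    · -- next_le
      intro mi
      by_cases hmi : mi = m
      · subst hmi; simp only [acceptState, Function.update_self]; omega
      · simp only [acceptState, Function.update_of_ne hmi]; exact hI.next_le mi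
    · exact props_iff'
    · -- match_next
      intro wj mi hmatch
      simp only [acceptState] at hmatch ⊢
      by_cases hwj : wj = w
      · subst hwj
        rw [Function.update_self] at hmatch
        have hmi : mi = m := (Option.some.inj hmatch).symm
        subst hmi
        rw [Function.update_self, hrkw]
      · rw [Function.update_of_ne hwj] at hmatch
        have hmi : mi ≠ m := hne_of_match _ _ hmatch
        rw [Function.update_of_ne hmi]
        exact hI.match_next wj mi hmatch
    · -- match_inj
      intro w1 w2 mi h1 h2
      simp only [acceptState] at h1 h2
      by_cases hw1 : w1 = w <;> by_cases hw2 : w2 = w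
      · rw [hw1, hw2]
      · subst hw1
        rw [Function.update_self] at h1
        rw [Function.update_of_ne hw2] at h2
        exact absurd h2 (by rw [← Option.some.inj h1]; exact hunm w2)
      · subst hw2
        rw [Function.update_self] at h2
        rw [Function.update_of_ne hw1] at h1
        exact absurd h1 (by rw [← Option.some.inj h2]; exact hunm w1)
      · rw [Function.update_of_ne hw1] at h1
        rw [Function.update_of_ne hw2] at h2
        exact hI.match_inj w1 w2 mi h1 h2
    · -- held_best
      intro mi wj hmem
      simp only [acceptState]
      rcases List.mem_cons.mp hmem with hh | hh
      · have h1 : mi = m := congrArg Prod.fst hh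
        have h2 : wj = w := congrArg Prod.snd hh
        exact ⟨m, by rw [h2, Function.update_self], le_of_eq (by rw [h1])⟩
      · by_cases hwj : wj = w
        · subst hwj
          obtain ⟨mj, hmj, hle⟩ := hI.held_best mi w hh
          have hlt := hbetter mj hmj
          rw [Fin.lt_def] at hlt
          exact ⟨m, by rw [Function.update_self], by omega⟩
        · rw [Function.update_of_ne hwj]
          exact hI.held_best mi wj hh
    · -- opt
      intro μ hμ mi hmem
      simp only [acceptState]
      rcases List.mem_cons.mp hmem with hh | hh
      · have h1 : mi = m := congrArg Prod.fst hh
        have h2 : μ mi = w := congrArg Prod.snd hh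
        rw [h2, Function.update_self, h1]
      · have hold := hI.opt μ hμ mi hh
        by_cases hwj : μ mi = w
        · -- mi is held by w, but m evicts him: blocking pair (m, w) for μ
          exfalso
          rw [hwj] at hold
          have hmi_ne : mi ≠ m := hne_of_match _ _ hold
          have hlt := hbetter mi hold
          -- show (m, μ m) ∉ s.props
          have hμm_ne : μ m ≠ w := by
            intro hc
            exact hmi_ne (hμ.1.1 (hwj.trans hc.symm))
          have hnp : (m, μ m) ∉ s.props := by
            intro hc
            exact hunm (μ m) (hI.opt μ hμ m hc)
          have hge : s.next m ≤ ((P.M m).symm (μ m) : ℕ) := by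
            have := (hI.props_iff m (μ m)).not.mp hnp; omega
          have hne2 : ((P.M m).symm (μ m) : ℕ) ≠ s.next m := by
            intro hc
            apply hμm_ne
            apply (P.M m).symm.injective
            apply Fin.ext
            rw [hrkw]; exact hc
          apply hμ.2 m w
          refine ⟨?_, mi, hwj, hlt⟩
          simp only [Profile.mpref, Fin.lt_def]
          omega
        · rw [Function.update_of_ne hwj]
          exact hold
  · -- reject case
    rw [hstep]
    constructor
    · intro mi
      by_cases hmi : mi = m
      · subst hmi; simp only [rejectState, Function.update_self]; omega
      · simp only [rejectState, Function.update_of_ne hmi]; exact hI.next_le mi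
    · exact props_iff'
    · intro wj mi hmatch
      simp only [rejectState] at hmatch ⊢
      have hmi : mi ≠ m := hne_of_match _ _ hmatch
      rw [Function.update_of_ne hmi]
      exact hI.match_next wj mi hmatch
    · intro w1 w2 mi h1 h2
      exact hI.match_inj w1 w2 mi h1 h2
    · intro mi wj hmem
      simp only [rejectState]
      rcases List.mem_cons.mp hmem with hh | hh
      · obtain ⟨h1, h2⟩ := Prod.mk.injEq _ _ _ _ ▸ hh
        subst h1; subst h2
        refine ⟨m', hm', ?_⟩
        have := le_of_not_gt hnlt
        rw [Fin.le_def] at this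
        exact this
      · exact hI.held_best mi wj hh
    · intro μ hμ mi hmem
      simp only [rejectState]
      rcases List.mem_cons.mp hmem with hh | hh
      · -- μ mi = w rejected: blocking pair (m', w) for μ
        exfalso
        have h1 : mi = m := congrArg Prod.fst hh
        have h2 : μ mi = w := congrArg Prod.snd hh
        rw [h1] at h2
        have hm'_ne : m' ≠ m := fun hc => hunm w (hc ▸ hm')
        have hμm'_ne : μ m' ≠ w := fun hc => hm'_ne (hμ.1.1 (hc.trans h2.symm))
        have hnp : (m', μ m') ∉ s.props := fun hc =>
          hμm'_ne (hI.match_inj _ _ _ (hI.opt μ hμ m' hc) hm')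
        have hge : s.next m' ≤ ((P.M m').symm (μ m') : ℕ) := by
          have := (hI.props_iff m' (μ m')).not.mp hnp; omega
        have hnm' := hI.match_next w m' hm'
        have hwp : (P.W w).symm m' < (P.W w).symm m := by
          rcases lt_or_eq_of_le (le_of_not_gt hnlt) with hlt | heq2
          · exact hlt
          · exact absurd ((P.W w).symm.injective heq2) hm'_ne
        apply hμ.2 m' w
        refine ⟨?_, m, h2, hwp⟩
        simp only [Profile.mpref, Fin.lt_def]
        omega
      · exact hI.opt μ hμ mi hh

end InvSection

section RunSection
variable {n : ℕ}

lemma GSstep_props_grow {P : Profile n} {s : GSState n} {m : Fin n}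
    (hf : (List.finRange n).find? (fun x => isUnmatched s x && decide (s.next x < n)) = some m) :
    GSstep P s ≠ s := by
  obtain ⟨h, -, hcase⟩ := GSstep_find?_some (P := P) hf
  intro hc
  rcases hcase with ⟨-, hstep⟩ | ⟨-, hstep⟩ <;>
    [skip; skip] <;>
    (rw [hc] at hstep
     have hpp := congrArg GSState.props hstep
     simp only [acceptState, rejectState] at hpp
     exact List.cons_ne_self _ _ hpp.symm)

lemma GSstep_sum {P : Profile n} {s : GSState n} (hne : GSstep P s ≠ s) :
    (∑ mi, (GSstep P s).next mi) = (∑ mi, s.next mi) + 1 := by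
  rcases hf : (List.finRange n).find? (fun x => isUnmatched s x && decide (s.next x < n))
    with - | m
  · exact absurd (GSstep_none hf) hne
  obtain ⟨h, -, hcase⟩ := GSstep_find?_some (P := P) hf
  have hnext : (GSstep P s).next = Function.update s.next m (s.next m + 1) := by
    rcases hcase with ⟨-, hstep⟩ | ⟨-, hstep⟩ <;> rw [hstep] <;> rfl
  rw [hnext]
  have h1 := Finset.sum_update_of_mem (Finset.mem_univ m) s.next (s.next m + 1)
  have h2 := Finset.add_sum_erase Finset.univ s.next (Finset.mem_univ m)
  rw [Finset.erase_eq] at h2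
  omega

lemma GSInv_iter (P : Profile n) (k : ℕ) : GSInv P ((GSstep P)^[k] (GSinit n)) := by
  induction k with
  | zero => exact GSInv_init P
  | succ k ih => rw [Function.iterate_succ_apply']; exact GSInv_step ih

lemma GSInv_run (P : Profile n) : GSInv P (GSrun P) := GSInv_iter P (n * n + 1)

lemma sum_next_le {P : Profile n} {s : GSState n} (hI : GSInv P s) :
    (∑ mi, s.next mi) ≤ n * n := by
  calc (∑ mi, s.next mi) ≤ ∑ _mi : Fin n, n := Finset.sum_le_sum fun i _ => hI.next_le i
  _ = n * n := by simp [Finset.sum_const, Finset.card_univ, Nat.mul_comm]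

lemma GSrun_fixed (P : Profile n) : GSstep P (GSrun P) = GSrun P := by
  have hex : ∃ k, k ≤ n * n ∧ GSstep P ((GSstep P)^[k] (GSinit n)) = (GSstep P)^[k] (GSinit n) := by
    by_contra hno
    push_neg at hno
    have key : ∀ k, k ≤ n * n + 1 → k ≤ ∑ mi, ((GSstep P)^[k] (GSinit n)).next mi := by
      intro k
      induction k with
      | zero => intro _; exact Nat.zero_le _
      | succ k ih =>
        intro hk
        have hk' : k ≤ n * n := by omega
        have hne := hno k hk'
        have := GSstep_sum hne
        rw [Function.iterate_succ_apply']
        have := ih (by omega)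
        omega
    have h1 := key (n * n + 1) (le_refl _)
    have h2 := sum_next_le (GSInv_iter P (n * n + 1))
    omega
  obtain ⟨k, hk, hfix⟩ := hex
  have hrun : GSrun P = (GSstep P)^[k] (GSinit n) := by
    rw [GSrun, show n * n + 1 = (n * n + 1 - k) + k by omega, Function.iterate_add_apply]
    exact Function.iterate_fixed hfix _
  rw [hrun]
  exact hfix

lemma all_matched (P : Profile n) (mi : Fin n) : ∃ u, (GSrun P).wmatch u = some mi := by
  by_contra hno
  push_neg at hno
  have hI := GSInv_run P
  have hfix := GSrun_fixed P
  -- find? must return none at the fixed point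
  rcases hf : (List.finRange n).find?
      (fun x => isUnmatched (GSrun P) x && decide ((GSrun P).next x < n)) with - | m
  · have hpred := List.find?_eq_none.mp hf mi (List.mem_finRange mi)
    simp only [Bool.and_eq_true, decide_eq_true_eq, not_and, isUnmatched_iff] at hpred
    have hunm : ∀ u, (GSrun P).wmatch u ≠ some mi := fun u => hno u
    have hn : ¬ (GSrun P).next mi < n := hpred hunm
    have hall : ∀ u : Fin n, (mi, u) ∈ (GSrun P).props := fun u =>
      (hI.props_iff mi u).mpr (lt_of_lt_of_le ((P.M mi).symm u).isLt (by omega))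
    have hmatched : ∀ u : Fin n, ∃ mj, (GSrun P).wmatch u = some mj := fun u =>
      ((hI.held_best mi u (hall u)).imp fun mj hj => hj.1)
    choose f hfm using hmatched
    have finj : Function.Injective f := fun u v huv =>
      hI.match_inj u v (f u) (hfm u) (huv ▸ hfm v)
    obtain ⟨u, hu⟩ := Finite.surjective_of_injective finj mi
    exact hno u (by rw [hfm u, hu])
  · exact GSstep_props_grow hf hfix

lemma DA_spec (P : Profile n) (mi : Fin n) : (GSrun P).wmatch (DA P mi) = some mi := by
  have h : ∃ u, (GSrun P).wmatch u = some mi := all_matched P mi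
  rw [DA, dif_pos h]
  exact h.choose_spec

lemma DA_inj (P : Profile n) : Function.Injective (DA P) := by
  intro a b hab
  have h1 := DA_spec P a
  have h2 := DA_spec P b
  rw [hab] at h1
  exact Option.some.inj (h1.symm.trans h2)

lemma DA_bij (P : Profile n) : Function.Bijective (DA P) :=
  ⟨DA_inj P, Finite.surjective_of_injective (DA_inj P)⟩

lemma next_run (P : Profile n) (mi : Fin n) :
    (GSrun P).next mi = ((P.M mi).symm (DA P mi) : ℕ) + 1 :=
  (GSInv_run P).match_next _ _ (DA_spec P mi)

lemma Proposes_iff (P : Profile n) (mi wj : Fin n) :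
    Proposes P mi wj ↔ ((P.M mi).symm wj : ℕ) ≤ ((P.M mi).symm (DA P mi) : ℕ) := by
  rw [Proposes, (GSInv_run P).props_iff, next_run]
  omega

lemma DA_stable (P : Profile n) : Stable P (DA P) := by
  refine ⟨DA_bij P, fun mi w hb => ?_⟩
  obtain ⟨hmp, m', hm', hwp⟩ := hb
  rw [Profile.mpref, Fin.lt_def] at hmp
  have hprop : (mi, w) ∈ (GSrun P).props := by
    rw [(GSInv_run P).props_iff, next_run]
    omega
  obtain ⟨mj, hmj, hle⟩ := (GSInv_run P).held_best mi w hprop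
  have hmjm' : mj = m' := by
    have h2 := DA_spec P m'
    rw [hm'] at h2
    exact Option.some.inj (hmj.symm.trans h2)
  subst hmjm'
  rw [Profile.wpref, Fin.lt_def] at hwp
  omega

lemma DA_opt (P : Profile n) (μ : Fin n → Fin n) (hμ : Stable P μ) (mi : Fin n) :
    ((P.M mi).symm (DA P mi) : ℕ) ≤ ((P.M mi).symm (μ mi) : ℕ) := by
  by_cases hp : (mi, μ mi) ∈ (GSrun P).props
  · have h1 := (GSInv_run P).opt μ hμ mi hp
    have h2 := DA_spec P mi
    have heq := (GSInv_run P).match_inj _ _ _ h1 h2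
    rw [heq]
  · have := (GSInv_run P).props_iff mi (μ mi)
    rw [next_run] at this
    have := this.not.mp hp
    omega

end RunSection

/-- Under a no-regret push-up, every proposal made during the run of
DA on the true profile also occurs during the run of DA on the manipulated profile. -/
theorem noRegret_pushUp_proposals_contained (n : ℕ) (P : Profile n) (m : Fin n)
    (X : Set (Fin n)) (hX : X ⊆ Below (P.M m) (DA P m))
    (e' : Fin n ≃ Fin n) (hpu : PushUp P m X e')
    (hnr : DA (P.updateM m e') m = DA P m) :
    ∀ mi wj : Fin n, Proposes P mi wj → Proposes (P.updateM m e') mi wj := by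
  set P' : Profile n := P.updateM m e' with hP'
  have hMm : P'.M m = e' := by
    simp [hP', Profile.updateM]
  have hM' : ∀ mi, mi ≠ m → P'.M mi = P.M mi := by
    intro mi hmi
    simp [hP', Profile.updateM, Function.update_of_ne hmi]
  have hW' : P'.W = P.W := rfl
  unfold PushUp PushUpDown at hpu
  rw [Set.diff_empty] at hpu
  -- any woman strictly above DA P m on m's true list is strictly above on e'
  have habove : ∀ w : Fin n, ((P.M m).symm w : ℕ) < ((P.M m).symm (DA P m) : ℕ) →
      (e'.symm w : ℕ) < (e'.symm (DA P m) : ℕ) := by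
    intro w hw
    have hmem : w ∈ Above (P.M m) (DA P m) := by
      simp only [Above, Set.mem_setOf_eq, Fin.lt_def]
      exact hw
    have : w ∈ Above e' (DA P m) := by
      rw [hpu]; exact Set.mem_union_left _ hmem
    simpa only [Above, Set.mem_setOf_eq, Fin.lt_def] using this
  -- DA P' is stable with respect to the true profile P
  have hstab : Stable P (DA P') := by
    refine ⟨DA_bij P', fun mi w hb => ?_⟩
    obtain ⟨hmp, m', hm', hwp⟩ := hb
    by_cases hmi : mi = m
    · subst hmi
      apply (DA_stable P').2 mi w
      refine ⟨?_, m', hm', hwp⟩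
      rw [Profile.mpref, hMm]
      rw [Profile.mpref, hnr, Fin.lt_def] at hmp
      rw [Fin.lt_def, hnr]
      exact habove w hmp
    · apply (DA_stable P').2 mi w
      refine ⟨?_, m', hm', hwp⟩
      rw [Profile.mpref, hM' mi hmi]
      exact hmp
  intro mi wj hp
  rw [Proposes_iff] at hp
  rw [Proposes_iff]
  by_cases hmi : mi = m
  · subst hmi
    rw [hMm, hnr]
    by_cases hwj : wj = DA P mi
    · rw [hwj]
    · have hlt : ((P.M mi).symm wj : ℕ) < ((P.M mi).symm (DA P mi) : ℕ) := by
        rcases lt_or_eq_of_le hp with h | h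
        · exact h
        · exfalso
          exact hwj ((P.M mi).symm.injective (Fin.ext h))
      exact le_of_lt (habove wj hlt)
  · rw [hM' mi hmi]
    calc ((P.M mi).symm wj : ℕ) ≤ ((P.M mi).symm (DA P mi) : ℕ) := hp
    _ ≤ ((P.M mi).symm (DA P' mi) : ℕ) := DA_opt P (DA P') hstab mi
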